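/- Let p be an odd prime and q a prime distinct from p, and suppose the multiplicative order of q modulo p equals 2r for some positive integer r (so q^r ≡ −1 (mod p)). Set f = 2r. Then the number of elements β ∈ 𝔽_{q^r} for which there exists a ∈ 𝔽_{q^f} with a² − βa + 1 = 0 and a not a p-th power in 𝔽_{q^f} equals (q^r + 1)(p − 1)/(2p). -/

import Mathlib

open Polynomial Finset

lemma aux_char {E : Type} [Field E] [Fintype E] {q m : ℕ} (hq : q.Prime) (hm : m ≠ 0)
    (hcard : Fintype.card E = q ^ m) : CharP E q := by
  obtain ⟨n, hchar, hcardc⟩ := FiniteField.card E (ringChar E)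
  have hdvd : q ∣ ringChar E ^ (n : ℕ) := by
    rw [← hcardc, hcard]; exact dvd_pow_self q hm
  have : q = ringChar E := (Nat.prime_dvd_prime_iff_eq hq hchar).mp (hq.dvd_of_dvd_pow hdvd)
  exact this ▸ ringChar.charP E

lemma aux_pth_power_iff {K : Type} [Field K] [Fintype K] {p : ℕ} (hp : p.Prime)
    (hdvd : p ∣ Fintype.card K - 1) {a : K} (ha : a ≠ 0) :
    (∃ c : K, c ^ p = a) ↔ a ^ ((Fintype.card K - 1) / p) = 1 := by
  classical
  constructor
  · rintro ⟨c, rfl⟩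
    have hc : c ≠ 0 := by
      intro h; rw [h, zero_pow hp.ne_zero] at ha; exact ha rfl
    rw [← pow_mul, Nat.mul_div_cancel' hdvd, FiniteField.pow_card_sub_one_eq_one c hc]
  · intro h1
    obtain ⟨g, hg⟩ := IsCyclic.exists_generator (α := Kˣ)
    have hord : orderOf g = Fintype.card K - 1 := by
      rw [orderOf_eq_card_of_forall_mem_zpowers hg, Nat.card_eq_fintype_card, Fintype.card_units]
    obtain ⟨k, hk⟩ := (Submonoid.mem_powers_iff _ _).mp
      ((mem_powers_iff_mem_zpowers).mpr (hg (Units.mk0 a ha)))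
    set t := (Fintype.card K - 1) / p with htdef
    have ht0 : 0 < t := by
      apply Nat.div_pos (Nat.le_of_dvd ?_ hdvd) hp.pos
      have := Fintype.one_lt_card (α := K); omega
    have hpow : (g ^ k) ^ t = 1 := by
      have : (((g ^ k) ^ t : Kˣ) : K) = 1 := by
        push_cast [hk]
        simpa using h1
      exact Units.ext this
    have hdvd2 : (Fintype.card K - 1) ∣ k * t := by
      have := orderOf_dvd_of_pow_eq_one (by rw [pow_mul]; exact hpow : g ^ (k * t) = 1)
      rwa [hord] at this
    have hpk : p ∣ k := by
      have h2 : p * t = Fintype.card K - 1 := Nat.mul_div_cancel' hdvd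
      rw [← h2] at hdvd2
      exact (Nat.mul_dvd_mul_iff_right ht0).mp hdvd2
    obtain ⟨m, rfl⟩ := hpk
    refine ⟨((g ^ m : Kˣ) : K), ?_⟩
    rw [← Units.val_pow_eq_pow_val, ← pow_mul, mul_comm m p, hk]
    rfl

lemma aux_fixed {F E : Type} [Field F] [Field E] [Fintype F] [Fintype E] [Algebra F E]
    {q r : ℕ} (hq : 1 < q) (hr : r ≠ 0) (hcardF : Fintype.card F = q ^ r)
    {x : E} (hx : x ^ q ^ r = x) : ∃ b : F, algebraMap F E b = x := by
  classical
  set P : E[X] := X ^ q ^ r - X with hP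
  have hP0 : P ≠ 0 := FiniteField.X_pow_card_pow_sub_X_ne_zero E hr hq
  have hdeg : P.natDegree = q ^ r := FiniteField.X_pow_card_pow_sub_X_natDegree_eq E hr hq
  set S : Finset E := univ.filter (fun y => y ^ q ^ r = y) with hS
  have hSsub : S ⊆ P.roots.toFinset := by
    intro y hy
    rw [Multiset.mem_toFinset, mem_roots hP0]
    have : y ^ q ^ r = y := (Finset.mem_filter.mp hy).2
    simp [P, IsRoot.def, sub_eq_zero, this]
  have hScard : S.card ≤ q ^ r := by
    calc S.card ≤ P.roots.toFinset.card := Finset.card_le_card hSsub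
      _ ≤ Multiset.card P.roots := Multiset.toFinset_card_le _
      _ ≤ P.natDegree := P.card_roots'
      _ = q ^ r := hdeg
  set R : Finset E := univ.image (algebraMap F E) with hR
  have hRcard : R.card = q ^ r := by
    rw [hR, Finset.card_image_of_injective _ (algebraMap F E).injective, card_univ, hcardF]
  have hRS : R ⊆ S := by
    intro y hy
    obtain ⟨b, _, rfl⟩ := Finset.mem_image.mp hy
    rw [hS, Finset.mem_filter]
    refine ⟨Finset.mem_univ _, ?_⟩
    rw [← map_pow]
    congr 1
    conv_lhs => rw [← hcardF]
    exact FiniteField.pow_card b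
  have hRSeq : R = S := Finset.eq_of_subset_of_card_le hRS (hScard.trans hRcard.symm.le)
  have hxS : x ∈ S := by rw [hS, Finset.mem_filter]; exact ⟨Finset.mem_univ _, hx⟩
  rw [← hRSeq] at hxS
  obtain ⟨b, _, hb⟩ := Finset.mem_image.mp hxS
  exact ⟨b, hb⟩

lemma aux_card_nthRoots {K : Type} [Field K] [Fintype K] {m : ℕ} (hm : m ≠ 0)
    (hdvd : m ∣ Fintype.card K - 1) : (Polynomial.nthRootsFinset m (1 : K)).card = m := by
  classical
  obtain ⟨g, hg⟩ := IsCyclic.exists_generator (α := Kˣ)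
  have hord : orderOf g = Fintype.card K - 1 := by
    rw [orderOf_eq_card_of_forall_mem_zpowers hg, Nat.card_eq_fintype_card, Fintype.card_units]
  have h0 : orderOf g ≠ 0 := by
    rw [hord]
    have := Fintype.one_lt_card (α := K); omega
  have hom : orderOf (g ^ (orderOf g / m)) = m :=
    orderOf_pow_orderOf_div h0 (by rw [hord]; exact hdvd)
  have hprim : IsPrimitiveRoot ((g ^ (orderOf g / m) : Kˣ) : K) m := by
    have h1 := IsPrimitiveRoot.orderOf ((g ^ (orderOf g / m) : Kˣ) : K)
    rwa [orderOf_units, hom] at h1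
  exact hprim.card_nthRootsFinset

theorem stmt_19 (p q r : ℕ) (hp : p.Prime) (hpodd : p ≠ 2)
    (hq : q.Prime) (hqp : q ≠ p) (hr : 0 < r)
    (horder : orderOf ((q : ℕ) : ZMod p) = 2 * r)
    (F E : Type) [Field F] [Field E] [Fintype F] [Fintype E] [Algebra F E]
    (hcardF : Fintype.card F = q ^ r) (hcardE : Fintype.card E = q ^ (2 * r)) :
    2 * p * Nat.card {β : F | ∃ a : E,
        a ^ 2 - algebraMap F E β * a + 1 = 0 ∧ ¬∃ c : E, c ^ p = a}
      = (q ^ r + 1) * (p - 1) := by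
  classical
  haveI := Fact.mk hp
  haveI := Fact.mk hq
  haveI : CharP E q := aux_char hq (by omega) hcardE
  set n : ℕ := q ^ r with hn
  set N : ℕ := n + 1 with hN
  have h1n : 2 ≤ n := Nat.one_lt_pow hr.ne' hq.one_lt
  -- p ∣ N
  have hx2 : ((q : ZMod p)) ^ (2 * r) = 1 := by
    rw [← horder]; exact pow_orderOf_eq_one _
  have hxr1 : ((q : ZMod p)) ^ r ≠ 1 := by
    intro h
    have h2 := orderOf_dvd_of_pow_eq_one h
    rw [horder] at h2
    have := Nat.le_of_dvd hr h2
    omega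
  have hxneg : ((q : ZMod p)) ^ r = -1 := by
    have hsq : (((q : ZMod p)) ^ r - 1) * (((q : ZMod p)) ^ r + 1) = 0 := by
      have : (((q : ZMod p)) ^ r) ^ 2 = 1 := by
        rw [← pow_mul, mul_comm r 2, hx2]
      linear_combination this
    rcases mul_eq_zero.mp hsq with h | h
    · exact absurd (by linear_combination h) hxr1
    · linear_combination h
  have hpN : p ∣ N := by
    have : ((N : ℕ) : ZMod p) = 0 := by
      push_cast [hN, hn]
      rw [hxneg]; ring
    exact (ZMod.natCast_eq_zero_iff _ _).mp this
  -- p does not divide n - 1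
  have hpn1 : ¬ p ∣ n - 1 := by
    intro hd
    have h0 : (((n - 1 : ℕ)) : ZMod p) = 0 := (ZMod.natCast_eq_zero_iff _ _).mpr hd
    rw [Nat.cast_sub (by omega), Nat.cast_one, sub_eq_zero] at h0
    apply hxr1
    rw [hn] at h0
    push_cast at h0
    rw [h0]
  have hcopn1 : p.Coprime (n - 1) := (Nat.Prime.coprime_iff_not_dvd hp).mpr hpn1
  -- card E - 1 = (n-1) * N
  have hEn : Fintype.card E = n * n := by
    rw [hcardE, hn, two_mul, pow_add]
  have hQ : Fintype.card E - 1 = (n - 1) * N := by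
    have : (n - 1) * N = n * n - 1 := by
      rw [hN]; zify [show 1 ≤ n by omega, show 1 ≤ n * n from Nat.one_le_iff_ne_zero.mpr (by positivity)]
      ring
    omega
  have hdvdN : N ∣ Fintype.card E - 1 := by rw [hQ]; exact Dvd.intro_left _ rfl
  have hpE : p ∣ Fintype.card E - 1 := dvd_trans hpN hdvdN
  have htp : N / p ∣ N := Nat.div_dvd_of_dvd hpN
  have hposN : 0 < N := by omega
  have hposNp : 0 < N / p := Nat.div_pos (Nat.le_of_dvd hposN hpN) hp.pos
  have hpNp : p * (N / p) = N := Nat.mul_div_cancel' hpN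
  -- the finset A
  set A : Finset E := (Polynomial.nthRootsFinset N (1 : E)) \ (Polynomial.nthRootsFinset (N / p) (1 : E))
    with hA
  have hmemA : ∀ x : E, x ∈ A ↔ (x ^ N = 1 ∧ ¬ x ^ (N / p) = 1) := by
    intro x
    rw [hA, Finset.mem_sdiff, Polynomial.mem_nthRootsFinset hposN,
      Polynomial.mem_nthRootsFinset hposNp]
  have hsubA : Polynomial.nthRootsFinset (N / p) (1 : E) ⊆ Polynomial.nthRootsFinset N (1 : E) := by
    intro x hx
    rw [Polynomial.mem_nthRootsFinset hposNp] at hx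
    rw [Polynomial.mem_nthRootsFinset hposN, ← hpNp, mul_comm, pow_mul, hx, one_pow]
  have hAcard : A.card = N - N / p := by
    rw [hA, Finset.card_sdiff_of_subset hsubA, aux_card_nthRoots hposN.ne' hdvdN,
      aux_card_nthRoots hposNp.ne' (dvd_trans htp hdvdN)]
  -- bridge: for N-th roots of unity, p-th power iff (N/p)-th root
  have hbridge : ∀ a : E, a ^ N = 1 → ((∃ c : E, c ^ p = a) ↔ a ^ (N / p) = 1) := by
    intro a haN
    have ha0 : a ≠ 0 := by
      intro h; rw [h, zero_pow hposN.ne'] at haN; exact zero_ne_one haN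
    rw [aux_pth_power_iff hp hpE ha0]
    have hdiv : (Fintype.card E - 1) / p = (n - 1) * (N / p) := by
      rw [hQ, Nat.mul_div_assoc _ hpN]
    rw [hdiv, mul_comm, pow_mul]
    constructor
    · intro h
      set z : E := a ^ (N / p) with hz
      have hzp : z ^ p = 1 := by
        rw [hz, ← pow_mul, Nat.div_mul_cancel hpN, haN]
      have hzn : z ^ (n - 1) = 1 := h
      have hd1 : orderOf z ∣ p := orderOf_dvd_of_pow_eq_one hzp
      have hd2 : orderOf z ∣ n - 1 := orderOf_dvd_of_pow_eq_one hzn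
      have h3 : orderOf z ∣ Nat.gcd p (n - 1) := Nat.dvd_gcd hd1 hd2
      rw [Nat.coprime_iff_gcd_eq_one.mp hcopn1] at h3
      exact orderOf_eq_one_iff.mp (Nat.dvd_one.mp h3)
    · intro h; rw [h, one_pow]
  -- the image finset B
  set B : Finset E := A.image (fun a => a + a⁻¹) with hB
  -- key equivalence
  have hkey : ∀ β : F, (∃ a : E, a ^ 2 - algebraMap F E β * a + 1 = 0 ∧ ¬∃ c : E, c ^ p = a)
      ↔ algebraMap F E β ∈ B := by
    intro β
    constructor
    · rintro ⟨a, hroot, hnp⟩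
      have ha0 : a ≠ 0 := by
        rintro rfl; simpa using hroot
      set a' : E := algebraMap F E β - a with ha'
      have h1 : a * a' = 1 := by rw [ha']; linear_combination -hroot
      have hβsum : a + a' = algebraMap F E β := by rw [ha']; ring
      have hβfix : (algebraMap F E β) ^ q ^ r = algebraMap F E β := by
        rw [← map_pow]
        congr 1
        conv_lhs => rw [show q ^ r = Fintype.card F by rw [hcardF]]
        exact FiniteField.pow_card β
      have hconj : a ^ q ^ r + a' ^ q ^ r = a + a' := by
        rw [← add_pow_char_pow, hβsum, hβfix]
      have hconjmul : a ^ q ^ r * a' ^ q ^ r = 1 := by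
        rw [← mul_pow, h1, one_pow]
      have hcases : (a ^ q ^ r - a) * (a ^ q ^ r - a') = 0 := by
        linear_combination (a ^ q ^ r) * hconj + h1 - hconjmul
      rcases mul_eq_zero.mp hcases with hc | hc
      · exfalso
        have hfix : a ^ q ^ r = a := sub_eq_zero.mp hc
        have hord : a ^ (n - 1) = 1 := by
          have h2 : a ^ (n - 1) * a = 1 * a := by
            rw [one_mul, ← pow_succ, show n - 1 + 1 = n by omega, hn, hfix]
          exact mul_right_cancel₀ ha0 h2
        have hcop : p.Coprime (orderOf a) :=
          Nat.Coprime.coprime_dvd_right (orderOf_dvd_of_pow_eq_one hord) hcopn1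
        obtain ⟨m, hm⟩ := exists_pow_eq_self_of_coprime hcop
        exact hnp ⟨a ^ m, by rw [← pow_mul, mul_comm, pow_mul, hm]⟩
      · have hfix : a ^ q ^ r = a' := sub_eq_zero.mp hc
        have haN : a ^ N = 1 := by
          rw [hN, hn, pow_succ, hfix, mul_comm, h1]
        have haNp : ¬ a ^ (N / p) = 1 := fun h => hnp ((hbridge a haN).mpr h)
        refine Finset.mem_image.mpr ⟨a, (hmemA a).mpr ⟨haN, haNp⟩, ?_⟩
        rw [inv_eq_of_mul_eq_one_right h1, hβsum]
    · intro himg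
      obtain ⟨a, haA, hasum⟩ := Finset.mem_image.mp himg
      obtain ⟨haN, haNp⟩ := (hmemA a).mp haA
      have ha0 : a ≠ 0 := by
        intro h; rw [h, zero_pow hposN.ne'] at haN; exact zero_ne_one haN
      refine ⟨a, ?_, ?_⟩
      · rw [← hasum]
        linear_combination -(inv_mul_cancel₀ ha0)
      · intro hc; exact haNp ((hbridge a haN).mp hc)
  -- every element of B is in the range of algebraMap
  have hBrange : ∀ b ∈ B, b ∈ Set.range (algebraMap F E) := by
    intro b hb
    obtain ⟨a, haA, rfl⟩ := Finset.mem_image.mp hb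
    obtain ⟨haN, _⟩ := (hmemA a).mp haA
    have ha0 : a ≠ 0 := by
      intro h; rw [h, zero_pow hposN.ne'] at haN; exact zero_ne_one haN
    have hainv : a ^ q ^ r = a⁻¹ := by
      apply eq_inv_of_mul_eq_one_left
      rw [← pow_succ, show q ^ r + 1 = N by rw [hN, hn], haN]
    have hxfix : (a + a⁻¹) ^ q ^ r = a + a⁻¹ := by
      rw [add_pow_char_pow, hainv, inv_pow, hainv, inv_inv, add_comm]
    obtain ⟨b, hb'⟩ := aux_fixed hq.one_lt hr.ne' hcardF hxfix
    exact ⟨b, hb'⟩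
  -- rewrite the set as a finset
  have hpre : {β : F | ∃ a : E, a ^ 2 - algebraMap F E β * a + 1 = 0 ∧ ¬∃ c : E, c ^ p = a}
      = ↑(B.preimage (algebraMap F E)
          (Set.injOn_of_injective (algebraMap F E).injective)) := by
    ext β
    rw [Set.mem_setOf_eq, hkey β]
    simp [Finset.mem_preimage]
  rw [hpre, Nat.card_coe_set_eq, Set.ncard_coe_finset]
  have hprecard : (B.preimage (algebraMap F E)
      (Set.injOn_of_injective (algebraMap F E).injective)).card = B.card := by
    rw [← Finset.card_image_of_injective
      (B.preimage (algebraMap F E) (Set.injOn_of_injective (algebraMap F E).injective))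
      (algebraMap F E).injective]
    congr 1
    rw [Finset.image_preimage]
    exact Finset.filter_true_of_mem hBrange
  rw [hprecard]
  -- fibers of the sum map have two elements
  have hinvA : ∀ a ∈ A, a⁻¹ ∈ A := by
    intro a haA
    obtain ⟨haN, haNp⟩ := (hmemA a).mp haA
    refine (hmemA a⁻¹).mpr ⟨?_, ?_⟩
    · rw [inv_pow, haN, inv_one]
    · rw [inv_pow, inv_eq_one]; exact haNp
  have hne : ∀ a ∈ A, a ≠ a⁻¹ := by
    intro a haA heq
    obtain ⟨haN, haNp⟩ := (hmemA a).mp haA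
    have ha0 : a ≠ 0 := by
      intro h; rw [h, zero_pow hposN.ne'] at haN; exact zero_ne_one haN
    have hsq : a ^ 2 = 1 := by
      rw [pow_two]; nth_rewrite 2 [heq]; exact mul_inv_cancel₀ ha0
    have : (a - 1) * (a + 1) = 0 := by linear_combination hsq
    rcases mul_eq_zero.mp this with h | h
    · exact haNp (by rw [sub_eq_zero.mp h, one_pow])
    · have ha1 : a = -1 := by linear_combination h
      by_cases hone : (-1 : E) = 1
      · exact haNp (by rw [ha1, hone, one_pow])
      · by_cases hev : Even (N / p)
        · exact haNp (by rw [ha1, hev.neg_one_pow])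
        · have hoddNp : Odd (N / p) := Nat.odd_iff.mpr (Nat.not_even_iff.mp hev)
          have hoddp : Odd p := hp.odd_of_ne_two hpodd
          have hoddN : Odd N := by rw [← hpNp]; exact hoddp.mul hoddNp
          rw [ha1, hoddN.neg_one_pow] at haN
          exact hone haN
  have hfiber : ∀ b ∈ B, (A.filter fun a => a + a⁻¹ = b).card = 2 := by
    intro b hb
    obtain ⟨a₀, ha₀A, rfl⟩ := Finset.mem_image.mp hb
    obtain ⟨ha₀N, _⟩ := (hmemA a₀).mp ha₀A
    have ha₀0 : a₀ ≠ 0 := by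
      intro h; rw [h, zero_pow hposN.ne'] at ha₀N; exact zero_ne_one ha₀N
    have hset : (A.filter fun a => a + a⁻¹ = a₀ + a₀⁻¹) = {a₀, a₀⁻¹} := by
      ext x
      rw [Finset.mem_filter, Finset.mem_insert, Finset.mem_singleton]
      constructor
      · rintro ⟨hxA, hxb⟩
        obtain ⟨hxN, _⟩ := (hmemA x).mp hxA
        have hx0 : x ≠ 0 := by
          intro h; rw [h, zero_pow hposN.ne'] at hxN; exact zero_ne_one hxN
        have h1 : x * x⁻¹ = 1 := mul_inv_cancel₀ hx0
        have h2 : a₀ * a₀⁻¹ = 1 := mul_inv_cancel₀ ha₀0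
        have : (x - a₀) * (x - a₀⁻¹) = 0 := by
          linear_combination x * hxb + h2 - h1
        rcases mul_eq_zero.mp this with h | h
        · exact Or.inl (sub_eq_zero.mp h)
        · exact Or.inr (sub_eq_zero.mp h)
      · rintro (rfl | rfl)
        · exact ⟨ha₀A, rfl⟩
        · exact ⟨hinvA a₀ ha₀A, by rw [inv_inv, add_comm]⟩
    rw [hset, Finset.card_insert_of_notMem (by simpa using hne a₀ ha₀A), Finset.card_singleton]
  have hA2B : A.card = 2 * B.card := by
    rw [Finset.card_eq_sum_card_image (fun a => a + a⁻¹) A, ← hB,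
      Finset.sum_congr rfl hfiber, Finset.sum_const, smul_eq_mul, mul_comm]
  -- final arithmetic
  have h2B : 2 * B.card = N - N / p := by rw [← hA2B, hAcard]
  have hfin : 2 * p * B.card = (N - N / p) * p := by rw [← h2B]; ring
  rw [hfin, tsub_mul, mul_comm (N / p) p, hpNp, mul_tsub, mul_one, mul_comm N p]
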